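/- The stationarity condition ∂u_A/∂τ_A = 0 for the AON's expected age (for general σ_S, σ_C) is solved by τ_A = [(1−τ_T)(δ̄ − N_A(σ_S−σ_I)) + N_A N_T τ_T(σ_S−σ_C)] / [(1−τ_T)N_A(δ̄ + σ_I − σ_C − N_A(σ_S−σ_C)) + N_A N_T τ_T(σ_S−σ_C)], provided the denominator is nonzero. -/

import Mathlib

def uA (NA NT : ℕ) (σI σS σC δ τA τT : ℝ) : ℝ :=
  (1 - τA * (1 - τA) ^ (NA - 1) * (1 - τT) ^ NT) * δ
    + (1 - τA) ^ NA * (1 - τT) ^ NT * (σI - σC) + σC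
    + ((NA : ℝ) * τA * (1 - τA) ^ (NA - 1) * (1 - τT) ^ NT
        + (NT : ℝ) * τT * (1 - τT) ^ (NT - 1) * (1 - τA) ^ NA) * (σS - σC)

theorem stmt11 (NA NT : ℕ) (hNA : 2 ≤ NA) (hNT : 1 ≤ NT)
    (σI σS σC δ : ℝ) (hσI : 0 < σI) (hσS : 0 < σS) (hσC : 0 < σC) (hδ : 0 < δ)
    (τT : ℝ) (hτT : τT ∈ Set.Ico (0 : ℝ) 1)
    (τA : ℝ)
    (hden : (1 - τT) * (NA : ℝ) * (δ + σI - σC - (NA : ℝ) * (σS - σC))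
        + (NA : ℝ) * (NT : ℝ) * τT * (σS - σC) ≠ 0)
    (hτA : τA = ((1 - τT) * (δ - (NA : ℝ) * (σS - σI))
          + (NA : ℝ) * (NT : ℝ) * τT * (σS - σC))
        / ((1 - τT) * (NA : ℝ) * (δ + σI - σC - (NA : ℝ) * (σS - σC))
          + (NA : ℝ) * (NT : ℝ) * τT * (σS - σC))) :
    deriv (fun t => uA NA NT σI σS σC δ t τT) τA = 0 := by
  obtain ⟨m, rfl⟩ : ∃ m, NA = m + 2 := ⟨NA - 2, by omega⟩
  obtain ⟨k, rfl⟩ : ∃ k, NT = k + 1 := ⟨NT - 1, by omega⟩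
  set E : ℝ :=
    -δ * (1 - τT) ^ (k + 1) * ((1 - τA) ^ (m + 1) - ((m : ℝ) + 1) * τA * (1 - τA) ^ m)
      - ((m : ℝ) + 2) * (1 - τA) ^ (m + 1) * (1 - τT) ^ (k + 1) * (σI - σC)
      + (σS - σC) * (((m : ℝ) + 2) * (1 - τT) ^ (k + 1) *
          ((1 - τA) ^ (m + 1) - ((m : ℝ) + 1) * τA * (1 - τA) ^ m)
        - ((k : ℝ) + 1) * τT * (1 - τT) ^ k * ((m : ℝ) + 2) * (1 - τA) ^ (m + 1)) with hE
  have key : HasDerivAt (fun t : ℝ => uA (m + 2) (k + 1) σI σS σC δ t τT) E τA := by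
    have h1 : HasDerivAt (fun t : ℝ => (1 : ℝ) - t) (-1) τA := by
      simpa using (hasDerivAt_id τA).const_sub (1 : ℝ)
    have h2 := h1.pow (m + 1)
    have h3 := h1.pow (m + 2)
    have hid := hasDerivAt_id τA
    have hterm :=
      (((((hid.mul h2).mul_const ((1 - τT) ^ (k + 1))).const_sub 1).mul_const δ).add
          ((h3.mul_const ((1 - τT) ^ (k + 1))).mul_const (σI - σC))).add_const σC |>.add
        (((((hid.const_mul (((m : ℕ) + 2 : ℕ) : ℝ)).mul h2).mul_const
              ((1 - τT) ^ (k + 1))).add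
            (h3.const_mul ((((k : ℕ) + 1 : ℕ) : ℝ) * τT * (1 - τT) ^ k))).mul_const
          (σS - σC))
    have hd :
        (1 * ((m : ℝ) + 2) * (1 - τA) ^ (m + 2 - 1) * -1) = E → True := fun _ => trivial
    convert hterm using 1
    · rfl
    · rfl
    · rfl
    simp only [id_eq, Nat.add_sub_cancel, Pi.pow_apply, show m + 2 - 1 = m + 1 by omega]
    push_cast
    ring
  rw [key.deriv]
  have hkey : ((1 - τT) * ((m : ℝ) + 2) * (δ + σI - σC - ((m : ℝ) + 2) * (σS - σC))
        + ((m : ℝ) + 2) * ((k : ℝ) + 1) * τT * (σS - σC)) * τA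
      = (1 - τT) * (δ - ((m : ℝ) + 2) * (σS - σI))
        + ((m : ℝ) + 2) * ((k : ℝ) + 1) * τT * (σS - σC) := by
    push_cast at hden hτA
    rw [hτA]
    field_simp
    have hne : (1 - τT) * (δ + σI - σC - ((m : ℝ) + 2) * (σS - σC)) + τT * (σS - σC) * ((k : ℝ) + 1) ≠ 0 := by
      intro h; apply hden; linear_combination ((m : ℝ) + 2) * h
    field_simp
  rw [hE]
  linear_combination ((1 - τA) ^ m * (1 - τT) ^ k) * hkey
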